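/- For every frequency ω ∈ (0,∞), the two variational values coincide: γ_ω = β_ω, where γ_ω is the infimum of the action S_ω over nonzero H^1(ℝ^d×T^m)-functions with vanishing virial functional K, and β_ω is the infimum of S_ω over nonzero functions with vanishing Nehari functional N_ω. -/

import Mathlib

open MeasureTheory Real Filter Topology

noncomputable section

namespace NLS

/-- Points of `ℝ^d × ℝ^m`; functions that are `2π`-periodic in the second
variable model functions on the waveguide `ℝ^d × 𝕋^m`, `𝕋 = ℝ/2πℤ`. -/
abbrev Pt (d m : ℕ) := (Fin d → ℝ) × (Fin m → ℝ)

/-- Fundamental domain `ℝ^d × [0,2π)^m`. -/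
def fundDom (d m : ℕ) : Set (Pt d m) :=
  Set.univ ×ˢ Set.pi Set.univ fun _ => Set.Ico (0 : ℝ) (2 * π)

/-- The measure on the waveguide: Lebesgue measure restricted to a fundamental domain. -/
def μw (d m : ℕ) : Measure (Pt d m) := volume.restrict (fundDom d m)

/-- `2π`-periodicity in the torus variables. -/
def IsPeriodic {d m : ℕ} (u : Pt d m → ℂ) : Prop :=
  ∀ (p : Pt d m) (k : Fin m → ℤ), u (p.1, p.2 + fun i => 2 * π * (k i : ℝ)) = u p

/-- The `i`-th partial derivative in the `x` variables. -/
def dX {d m : ℕ} (u : Pt d m → ℂ) (p : Pt d m) (i : Fin d) : ℂ :=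
  fderiv ℝ u p (Pi.single i 1, 0)

/-- The `j`-th partial derivative in the `y` variables. -/
def dY {d m : ℕ} (u : Pt d m → ℂ) (p : Pt d m) (j : Fin m) : ℂ :=
  fderiv ℝ u p (0, Pi.single j 1)

/-- `‖∇ₓ u‖_{L²}²`. -/
def gradXsq (d m : ℕ) (u : Pt d m → ℂ) : ℝ :=
  ∫ p, (∑ i, ‖dX u p i‖ ^ 2) ∂(μw d m)

/-- `‖∇_y u‖_{L²}²`. -/
def gradYsq (d m : ℕ) (u : Pt d m → ℂ) : ℝ :=
  ∫ p, (∑ j, ‖dY u p j‖ ^ 2) ∂(μw d m)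

/-- The mass `M(u) = ‖u‖_{L²}²`. -/
def Mass (d m : ℕ) (u : Pt d m → ℂ) : ℝ :=
  ∫ p, ‖u p‖ ^ 2 ∂(μw d m)

/-- `‖u‖_{L^{α+2}}^{α+2}`. -/
def Pot (d m : ℕ) (α : ℝ) (u : Pt d m → ℂ) : ℝ :=
  ∫ p, ‖u p‖ ^ (α + 2) ∂(μw d m)

/-- Membership in `H^1(ℝ^d×𝕋^m) ∩ L^{α+2}` (with a differentiable representative). -/
structure InH1 (d m : ℕ) (α : ℝ) (u : Pt d m → ℂ) : Prop where
  diff : Differentiable ℝ u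
  periodic : IsPeriodic u
  memL2 : Integrable (fun p => ‖u p‖ ^ 2) (μw d m)
  memGradL2 : Integrable (fun p => ‖fderiv ℝ u p‖ ^ 2) (μw d m)
  memLp : Integrable (fun p => ‖u p‖ ^ (α + 2)) (μw d m)

/-- The energy `E(u)`. -/
def En (d m : ℕ) (α : ℝ) (u : Pt d m → ℂ) : ℝ :=
  (gradXsq d m u + gradYsq d m u) / 2 - Pot d m α u / (α + 2)

/-- The action `S_ω(u) = E(u) + (ω/2) M(u)`. -/
def Sw (d m : ℕ) (α ω : ℝ) (u : Pt d m → ℂ) : ℝ :=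
  En d m α u + ω / 2 * Mass d m u

/-- The virial functional `K(u)`. -/
def Kw (d m : ℕ) (α : ℝ) (u : Pt d m → ℂ) : ℝ :=
  gradXsq d m u - α * d / (2 * (α + 2)) * Pot d m α u

/-- The Nehari functional `N_ω(u)`. -/
def Nw (d m : ℕ) (α ω : ℝ) (u : Pt d m → ℂ) : ℝ :=
  ω * Mass d m u + gradXsq d m u + gradYsq d m u - Pot d m α u

/-- Values of the action on the virial-vanishing constraint set. -/
def gammaSet (d m : ℕ) (α ω : ℝ) : Set ℝ :=
  Sw d m α ω '' {u | InH1 d m α u ∧ u ≠ 0 ∧ Kw d m α u = 0}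

/-- `γ_ω = inf {S_ω(u) : u ∈ H¹∖{0}, K(u) = 0}`. -/
def gamma (d m : ℕ) (α ω : ℝ) : ℝ := sInf (gammaSet d m α ω)

/-- Values of the action on the Nehari constraint set. -/
def betaSet (d m : ℕ) (α ω : ℝ) : Set ℝ :=
  Sw d m α ω '' {u | InH1 d m α u ∧ u ≠ 0 ∧ Nw d m α ω u = 0}

/-- `β_ω = inf {S_ω(u) : u ∈ H¹∖{0}, N_ω(u) = 0}`. -/
def beta (d m : ℕ) (α ω : ℝ) : ℝ := sInf (betaSet d m α ω)

/-- `m_c = inf {E(u) : u ∈ H¹, M(u) = c, K(u) = 0}`. -/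
def mc (d m : ℕ) (α c : ℝ) : ℝ :=
  sInf (En d m α '' {u | InH1 d m α u ∧ Mass d m u = c ∧ Kw d m α u = 0})

/-- `u` is a minimizer for the problem `γ_ω`. -/
def IsGammaMin (d m : ℕ) (α ω : ℝ) (u : Pt d m → ℂ) : Prop :=
  InH1 d m α u ∧ u ≠ 0 ∧ Kw d m α u = 0 ∧ Sw d m α ω u = gamma d m α ω

/-- `u` is a minimizer for the problem `β_ω`. -/
def IsBetaMin (d m : ℕ) (α ω : ℝ) (u : Pt d m → ℂ) : Prop :=
  InH1 d m α u ∧ u ≠ 0 ∧ Nw d m α ω u = 0 ∧ Sw d m α ω u = beta d m α ω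

/-- `u` is a minimizer for the problem `m_c`. -/
def IsMcMin (d m : ℕ) (α c : ℝ) (u : Pt d m → ℂ) : Prop :=
  InH1 d m α u ∧ Mass d m u = c ∧ Kw d m α u = 0 ∧ En d m α u = mc d m α c

/-- Iterated directional derivative. -/
def d2 {d m : ℕ} (u : Pt d m → ℂ) (p v : Pt d m) : ℂ :=
  fderiv ℝ (fun q => fderiv ℝ u q v) p v

/-- The Laplacian in the `x` variables. -/
def lapX {d m : ℕ} (u : Pt d m → ℂ) (p : Pt d m) : ℂ :=
  ∑ i, d2 u p (Pi.single i 1, 0)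

/-- The Laplacian in the `y` variables. -/
def lapY {d m : ℕ} (u : Pt d m → ℂ) (p : Pt d m) : ℂ :=
  ∑ j, d2 u p (0, Pi.single j 1)

/-- The full Laplacian `Δ_{x,y}`. -/
def lap {d m : ℕ} (u : Pt d m → ℂ) (p : Pt d m) : ℂ := lapX u p + lapY u p

/-- `u` solves the stationary equation `-Δ_{x,y} u + ω u = |u|^α u`. -/
def SolvesStat (d m : ℕ) (α ω : ℝ) (u : Pt d m → ℂ) : Prop :=
  ∀ p, -lap u p + (ω : ℂ) * u p = (↑(‖u p‖ ^ α) : ℂ) * u p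

/-- `u` is (real-valued and) pointwise positive. -/
def IsPositive {d m : ℕ} (u : Pt d m → ℂ) : Prop :=
  ∀ p, 0 < (u p).re ∧ (u p).im = 0

/-- The mass-preserving scaling `v^t(x,y) = t^{d/2} u(tx, y)`. -/
def scaleX (d m : ℕ) (t : ℝ) (u : Pt d m → ℂ) : Pt d m → ℂ :=
  fun p => (↑(t ^ ((d : ℝ) / 2)) : ℂ) * u (t • p.1, p.2)

/-- `Q` is the (radial, positive) ground state of `-Δ Q + Q = Q^{1+4/d}` on `ℝ^d`. -/
def IsGroundStateQ (d : ℕ) (Q : Pt d 0 → ℂ) : Prop :=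
  InH1 d 0 (4 / (d : ℝ)) Q ∧ IsPositive Q ∧
  (∀ p q : Pt d 0, ∑ i, (p.1 i) ^ 2 = ∑ i, (q.1 i) ^ 2 → Q p = Q q) ∧
  SolvesStat d 0 (4 / (d : ℝ)) 1 Q

/-- The squared `H¹` norm. -/
def H1normSq (d m : ℕ) (u : Pt d m → ℂ) : ℝ :=
  Mass d m u + gradXsq d m u + gradYsq d m u

/-- `u : ℝ → H¹` solves the focusing NLS `i∂_t u + Δ_{x,y} u = -|u|^α u` on
the time interval `I`. -/
def IsNLSSolutionOn (d m : ℕ) (α : ℝ) (I : Set ℝ) (u : ℝ → Pt d m → ℂ) : Prop :=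
  (∀ t ∈ I, InH1 d m α (u t)) ∧
  ∀ t ∈ I, ∀ p, Complex.I * deriv (fun s => u s p) t + lap (u t) p
      = -((↑(‖u t p‖ ^ α) : ℂ) * u t p)

/-- `u` is a solution of the focusing NLS on the maximal (open, connected)
time interval `I ∋ 0`. -/
def IsMaximalNLSSolution (d m : ℕ) (α : ℝ) (I : Set ℝ) (u : ℝ → Pt d m → ℂ) : Prop :=
  IsOpen I ∧ (0 : ℝ) ∈ I ∧ IsPreconnected I ∧ IsNLSSolutionOn d m α I u ∧
  ∀ (J : Set ℝ) (v : ℝ → Pt d m → ℂ), IsOpen J → IsPreconnected J → I ⊆ J →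
    IsNLSSolutionOn d m α J v → (∀ t ∈ I, v t = u t) → J = I

/-- `v` is a global solution of the linear Schrödinger equation
`i∂_t v + Δ_{x,y} v = 0` (so that `v t = e^{itΔ} (v 0)`). -/
def IsLinearSolution (d m : ℕ) (v : ℝ → Pt d m → ℂ) : Prop :=
  ∀ t p, Complex.I * deriv (fun s => v s p) t + lap (v t) p = 0

end NLS

namespace NLS

variable {d m : ℕ} {α ω : ℝ}

lemma mass_nonneg (u : Pt d m → ℂ) : 0 ≤ Mass d m u :=
  integral_nonneg fun p => by positivity

lemma gradXsq_nonneg (u : Pt d m → ℂ) : 0 ≤ gradXsq d m u :=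
  integral_nonneg fun p => Finset.sum_nonneg fun i _ => by positivity

lemma gradYsq_nonneg (u : Pt d m → ℂ) : 0 ≤ gradYsq d m u :=
  integral_nonneg fun p => Finset.sum_nonneg fun i _ => by positivity

lemma pot_nonneg (u : Pt d m → ℂ) : 0 ≤ Pot d m α u :=
  integral_nonneg fun p => Real.rpow_nonneg (norm_nonneg _) _

lemma exists_fundDom_ne {u : Pt d m → ℂ} (hp : IsPeriodic u) (h : u ≠ 0) :
    ∃ q, q ∈ fundDom d m ∧ u q ≠ 0 := by
  have h2π : (0:ℝ) < 2 * π := by positivity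
  obtain ⟨p, hp0⟩ : ∃ p, u p ≠ 0 := by
    by_contra hc
    push_neg at hc
    exact h (funext fun p => hc p)
  set y' : Fin m → ℝ := fun i => 2 * π * Int.fract (p.2 i / (2 * π)) with hy'
  set k : Fin m → ℤ := fun i => ⌊p.2 i / (2 * π)⌋ with hk
  have hsum : (y' + fun i => 2 * π * (k i : ℝ)) = p.2 := by
    funext i
    simp only [Pi.add_apply, hy', hk, Int.fract]
    field_simp
    ring
  refine ⟨(p.1, y'), ⟨Set.mem_univ _, fun i _ => ?_⟩, ?_⟩
  · constructor
    · exact mul_nonneg h2π.le (Int.fract_nonneg _)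
    · have := Int.fract_lt_one (p.2 i / (2 * π))
      calc 2 * π * Int.fract (p.2 i / (2 * π)) < 2 * π * 1 := by
            exact mul_lt_mul_of_pos_left this h2π
        _ = 2 * π := mul_one _
  · have := hp (p.1, y') k
    simp only at this
    rw [hsum] at this
    rw [show ((p.1, y') : Pt d m).1 = p.1 from rfl] at this
    -- this : u (p.1, p.2) = u (p.1, y')
    intro hz
    apply hp0
    rw [← Prod.mk.eta (p := p)]
    rw [← this] at hz
    exact hz

end NLS
namespace NLS

variable {d m : ℕ} {α ω : ℝ}

lemma integral_pos_of_pos_at {g : Pt d m → ℝ} (hg : Continuous g) (hg0 : ∀ p, 0 ≤ g p)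
    (hgi : Integrable g (μw d m)) {q : Pt d m} (hq : q ∈ fundDom d m) (hgq : 0 < g q) :
    0 < ∫ p, g p ∂(μw d m) := by
  rw [integral_pos_iff_support_of_nonneg (fun p => hg0 p) hgi]
  -- find a small product box around q inside fundDom ∩ {g > 0}
  have hcont : ContinuousAt g q := hg.continuousAt
  obtain ⟨ε, hε, hball⟩ : ∃ ε > 0, ∀ p, dist p q < ε → 0 < g p := by
    have := Metric.continuousAt_iff.1 hcont (g q / 2) (by linarith)
    obtain ⟨δ, hδ, hδ'⟩ := this
    refine ⟨δ, hδ, fun p hpd => ?_⟩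
    have := hδ' hpd
    have : |g p - g q| < g q / 2 := by rwa [Real.dist_eq] at this
    have := abs_lt.1 this
    linarith
  -- the box
  set s : Set (Pt d m) :=
    (Metric.ball q.1 ε) ×ˢ (Set.pi Set.univ fun j => Set.Ico (q.2 j) (min (q.2 j + ε) (2 * π)))
    with hs
  have hsub : s ⊆ {p | 0 < g p} := by
    rintro ⟨x, y⟩ ⟨hx, hy⟩
    apply hball
    rw [Prod.dist_eq]
    refine max_lt hx ?_
    rcases Nat.eq_zero_or_pos m with hm0 | hm0
    · subst hm0
      simpa [dist_pi_lt_iff hε] using fun j => (Fin.elim0 j : _)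
    · rw [dist_pi_lt_iff hε]
      intro j
      obtain ⟨hj1, hj2⟩ := hy j (Set.mem_univ j)
      have hj3 : (x, y).2 j < q.2 j + ε := lt_of_lt_of_le hj2 (min_le_left _ _)
      rw [Real.dist_eq, abs_lt]
      constructor
      · linarith
      · linarith
  have hsubf : s ⊆ fundDom d m := by
    rintro ⟨x, y⟩ ⟨hx, hy⟩
    have hq2 := hq.2
    refine ⟨Set.mem_univ _, fun j _ => ?_⟩
    have hj := hy j (Set.mem_univ j)
    have hqj := hq2 j (Set.mem_univ j)
    exact ⟨le_trans hqj.1 hj.1, lt_of_lt_of_le hj.2 (min_le_right _ _)⟩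
  have hsmeas : MeasurableSet s :=
    (measurableSet_ball).prod (MeasurableSet.univ_pi fun j => measurableSet_Ico)
  have hvol : 0 < volume s := by
    rw [hs, show (volume : Measure (Pt d m)) = (volume : Measure (Fin d → ℝ)).prod volume from
      Measure.volume_eq_prod _ _, Measure.prod_prod]
    apply ENNReal.mul_pos
    · exact (Metric.measure_ball_pos _ _ hε).ne'
    · rw [MeasureTheory.volume_pi_pi]
      rw [Finset.prod_ne_zero_iff]
      intro j _
      rw [Real.volume_Ico]
      have hqj := hq.2 j (Set.mem_univ j)
      have : q.2 j < min (q.2 j + ε) (2 * π) := lt_min (by linarith) hqj.2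
      simp only [ne_eq, ENNReal.ofReal_eq_zero, not_le]
      linarith
  calc (0 : ENNReal) < volume s := hvol
    _ = μw d m s := by
        rw [μw, Measure.restrict_apply hsmeas, Set.inter_eq_self_of_subset_left hsubf]
    _ ≤ μw d m (Function.support g) := by
        apply measure_mono
        intro p hp
        exact (hsub hp).ne'
  -- done

lemma mass_pos {u : Pt d m → ℂ} (hu : InH1 d m α u) (h : u ≠ 0) : 0 < Mass d m u := by
  obtain ⟨q, hq, hq0⟩ := exists_fundDom_ne hu.periodic h
  exact integral_pos_of_pos_at (hu.diff.continuous.norm.pow 2) (fun p => by positivity)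
    hu.memL2 hq (pow_pos (norm_pos_iff.2 hq0) 2)

lemma pot_pos {u : Pt d m → ℂ} (hα : 0 < α + 2) (hu : InH1 d m α u) (h : u ≠ 0) :
    0 < Pot d m α u := by
  obtain ⟨q, hq, hq0⟩ := exists_fundDom_ne hu.periodic h
  have hcont : Continuous fun p => ‖u p‖ ^ (α + 2) := by
    apply continuous_iff_continuousAt.2
    intro p
    exact (Real.continuousAt_rpow_const _ _ (Or.inr hα.le)).comp
      ((hu.diff.continuous.norm).continuousAt)
  exact integral_pos_of_pos_at hcont (fun p => Real.rpow_nonneg (norm_nonneg _) _) hu.memLp hq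
    (Real.rpow_pos_of_pos (norm_pos_iff.2 hq0) _)

end NLS
namespace NLS

variable {d m : ℕ} {α ω : ℝ} {u : Pt d m → ℂ} {c : ℝ}

lemma norm_real_mul (c : ℝ) (z : ℂ) : ‖(c:ℂ) * z‖ = |c| * ‖z‖ := by
  rw [norm_mul, Complex.norm_real, Real.norm_eq_abs]

lemma smul_fderiv (hu : Differentiable ℝ u) (p : Pt d m) :
    fderiv ℝ (fun q => (c:ℂ) * u q) p = (c:ℂ) • fderiv ℝ u p :=
  fderiv_const_mul (hu p) _

lemma smul_dX (hu : Differentiable ℝ u) (p : Pt d m) (i : Fin d) :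
    dX (fun q => (c:ℂ) * u q) p i = (c:ℂ) * dX u p i := by
  rw [dX, dX, smul_fderiv hu]; rfl

lemma smul_dY (hu : Differentiable ℝ u) (p : Pt d m) (j : Fin m) :
    dY (fun q => (c:ℂ) * u q) p j = (c:ℂ) * dY u p j := by
  rw [dY, dY, smul_fderiv hu]; rfl

lemma mass_smul (hc : 0 < c) : Mass d m (fun q => (c:ℂ) * u q) = c ^ 2 * Mass d m u := by
  rw [Mass, Mass, ← integral_const_mul]
  congr 1; funext p
  rw [norm_real_mul, mul_pow, abs_of_pos hc]

lemma pot_smul (hα : 0 ≤ α + 2) (hc : 0 < c) :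
    Pot d m α (fun q => (c:ℂ) * u q) = c ^ (α + 2) * Pot d m α u := by
  rw [Pot, Pot, ← integral_const_mul]
  congr 1; funext p
  rw [norm_real_mul, Real.mul_rpow (abs_nonneg _) (norm_nonneg _), abs_of_pos hc]

lemma gradXsq_smul (hu : Differentiable ℝ u) (hc : 0 < c) :
    gradXsq d m (fun q => (c:ℂ) * u q) = c ^ 2 * gradXsq d m u := by
  rw [gradXsq, gradXsq, ← integral_const_mul]
  congr 1; funext p
  rw [Finset.mul_sum]
  congr 1; funext i
  rw [smul_dX hu, norm_real_mul, mul_pow, abs_of_pos hc]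

lemma gradYsq_smul (hu : Differentiable ℝ u) (hc : 0 < c) :
    gradYsq d m (fun q => (c:ℂ) * u q) = c ^ 2 * gradYsq d m u := by
  rw [gradYsq, gradYsq, ← integral_const_mul]
  congr 1; funext p
  rw [Finset.mul_sum]
  congr 1; funext j
  rw [smul_dY hu, norm_real_mul, mul_pow, abs_of_pos hc]

lemma inH1_smul (hu : InH1 d m α u) (hα : 0 ≤ α + 2) (hc : 0 < c) :
    InH1 d m α (fun q => (c:ℂ) * u q) := by
  refine ⟨hu.diff.const_mul _, fun p k => ?_, ?_, ?_, ?_⟩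
  · simp only [hu.periodic p k]
  · have : (fun p => ‖(c:ℂ) * u p‖ ^ 2) = fun p => c ^ 2 * ‖u p‖ ^ 2 := by
      funext p; rw [norm_real_mul, mul_pow, abs_of_pos hc]
    rw [this]; exact hu.memL2.const_mul _
  · have heq : ∀ p, ‖fderiv ℝ (fun q => (c:ℂ) * u q) p‖ ^ 2 = c ^ 2 * ‖fderiv ℝ u p‖ ^ 2 := by
      intro p
      rw [smul_fderiv hu.diff, norm_smul (↑c : ℂ) (fderiv ℝ u p), Complex.norm_real, Real.norm_eq_abs, mul_pow,
        abs_of_pos hc]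
    have : (fun p => ‖fderiv ℝ (fun q => (c:ℂ) * u q) p‖ ^ 2)
        = fun p => c ^ 2 * ‖fderiv ℝ u p‖ ^ 2 := funext heq
    rw [this]; exact hu.memGradL2.const_mul _
  · have : (fun p => ‖(c:ℂ) * u p‖ ^ (α + 2)) = fun p => c ^ (α + 2) * ‖u p‖ ^ (α + 2) := by
      funext p
      rw [norm_real_mul, Real.mul_rpow (abs_nonneg _) (norm_nonneg _), abs_of_pos hc]
    rw [this]; exact hu.memLp.const_mul _

lemma smul_ne_zero' (hc : c ≠ 0) (h : u ≠ 0) : (fun q => (c:ℂ) * u q) ≠ 0 := by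
  intro hz
  apply h
  funext p
  have := congrFun hz p
  simp only [Pi.zero_apply, mul_eq_zero] at this
  rcases this with h1 | h1
  · exact absurd (Complex.ofReal_eq_zero.1 h1) hc
  · exact h1

end NLS
namespace NLS

variable {d m : ℕ} {α ω : ℝ} {u : Pt d m → ℂ} {t : ℝ}

lemma prod_smul_left' {α' β : Type*} [MeasurableSpace α'] [MeasurableSpace β] (μ : Measure α')
    (ν : Measure β) [SFinite μ] [SFinite ν] (c : ENNReal) : (c • μ).prod ν = c • (μ.prod ν) := by
  ext s hs
  rw [Measure.prod_apply hs, Measure.smul_apply, Measure.prod_apply hs, lintegral_smul_measure]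

lemma measurable_scaleMap (t : ℝ) :
    Measurable (fun p : Pt d m => ((t • p.1, p.2) : Pt d m)) :=
  (measurable_fst.const_smul t).prodMk measurable_snd

lemma map_scale_μw (ht : 0 < t) :
    (μw d m).map (fun p : Pt d m => ((t • p.1, p.2) : Pt d m))
      = ENNReal.ofReal ((t ^ d)⁻¹) • μw d m := by
  have hbox : (fundDom d m) = Set.univ ×ˢ (Set.pi Set.univ fun _ => Set.Ico (0:ℝ) (2*π)) := rfl
  set ν : Measure (Fin m → ℝ) := volume.restrict (Set.pi Set.univ fun _ => Set.Ico (0:ℝ) (2*π))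
    with hν
  have hμw : μw d m = (volume : Measure (Fin d → ℝ)).prod ν := by
    rw [μw, hbox, hν, Measure.volume_eq_prod, ← Measure.prod_restrict, Measure.restrict_univ]
  have hmapvol : (volume : Measure (Fin d → ℝ)).map (fun x => t • x)
      = ENNReal.ofReal ((t ^ d)⁻¹) • volume := by
    have := Measure.map_addHaar_smul (volume : Measure (Fin d → ℝ)) (ne_of_gt ht)
    rw [this]
    congr 1
    rw [Module.finrank_pi, Fintype.card_fin]
    rw [abs_of_nonneg (by positivity)]
  have hfun : (fun p : Pt d m => ((t • p.1, p.2) : Pt d m))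
      = Prod.map (fun x : Fin d → ℝ => t • x) (id : (Fin m → ℝ) → (Fin m → ℝ)) := rfl
  rw [hμw, hfun, ← Measure.map_prod_map _ _ (measurable_const_smul t) measurable_id,
    Measure.map_id, hmapvol, prod_smul_left']

lemma integral_scale (ht : 0 < t) {g : Pt d m → ℝ}
    (hg : AEStronglyMeasurable g (μw d m)) :
    ∫ p, g (t • p.1, p.2) ∂(μw d m) = (t ^ d)⁻¹ * ∫ p, g p ∂(μw d m) := by
  have h1 : ∫ p, g (t • p.1, p.2) ∂(μw d m)
      = ∫ q, g q ∂((μw d m).map (fun p : Pt d m => ((t • p.1, p.2) : Pt d m))) := by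
    rw [integral_map (measurable_scaleMap t).aemeasurable]
    rw [map_scale_μw ht]
    exact hg.smul_measure _
  rw [h1, map_scale_μw ht, integral_smul_measure, ENNReal.toReal_ofReal (by positivity),
    smul_eq_mul]

lemma integrable_scale (ht : 0 < t) {g : Pt d m → ℝ} (hg : Integrable g (μw d m)) :
    Integrable (fun p : Pt d m => g (t • p.1, p.2)) (μw d m) := by
  have h2 : Integrable g ((μw d m).map (fun p : Pt d m => ((t • p.1, p.2) : Pt d m))) := by
    rw [map_scale_μw ht]
    exact hg.smul_measure ENNReal.ofReal_ne_top
  exact (integrable_map_measure (by rw [map_scale_μw ht]; exact hg.1.smul_measure _)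
    (measurable_scaleMap t).aemeasurable).1 h2

end NLS
namespace NLS

variable {d m : ℕ} {α ω : ℝ} {u : Pt d m → ℂ} {t : ℝ}

/-- The continuous linear map `(x, y) ↦ (t x, y)`. -/
def scaleCLM (d m : ℕ) (t : ℝ) : Pt d m →L[ℝ] Pt d m :=
  (t • ContinuousLinearMap.id ℝ (Fin d → ℝ)).prodMap (ContinuousLinearMap.id ℝ (Fin m → ℝ))

lemma scaleCLM_apply (p : Pt d m) : scaleCLM d m t p = (t • p.1, p.2) := rfl

lemma scaleX_hasFDerivAt (hu : Differentiable ℝ u) (p : Pt d m) :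
    HasFDerivAt (scaleX d m t u)
      ((↑(t ^ ((d:ℝ)/2)) : ℂ) • ((fderiv ℝ u (t • p.1, p.2)).comp (scaleCLM d m t))) p := by
  have h1 : HasFDerivAt (fun q : Pt d m => u (scaleCLM d m t q))
      ((fderiv ℝ u (scaleCLM d m t p)).comp (scaleCLM d m t)) p :=
    (hu (scaleCLM d m t p)).hasFDerivAt.comp p (scaleCLM d m t).hasFDerivAt
  exact h1.const_mul _

lemma scaleX_differentiable (hu : Differentiable ℝ u) :
    Differentiable ℝ (scaleX d m t u) :=
  fun p => (scaleX_hasFDerivAt hu p).differentiableAt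

lemma scaleX_fderiv (hu : Differentiable ℝ u) (p : Pt d m) :
    fderiv ℝ (scaleX d m t u) p
      = (↑(t ^ ((d:ℝ)/2)) : ℂ) • ((fderiv ℝ u (t • p.1, p.2)).comp (scaleCLM d m t)) :=
  (scaleX_hasFDerivAt hu p).fderiv

lemma scaleX_dX (hu : Differentiable ℝ u) (p : Pt d m) (i : Fin d) :
    dX (scaleX d m t u) p i
      = (↑(t ^ ((d:ℝ)/2)) : ℂ) * ((t : ℂ) * dX u (t • p.1, p.2) i) := by
  rw [dX, scaleX_fderiv hu]
  have h1 : scaleCLM d m t ((Pi.single i 1, 0) : Pt d m)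
      = t • ((Pi.single i 1, 0) : Pt d m) := by
    rw [scaleCLM_apply, Prod.smul_mk, smul_zero]
  rw [ContinuousLinearMap.smul_apply, ContinuousLinearMap.comp_apply, h1,
    ContinuousLinearMap.map_smul]
  rw [dX, smul_eq_mul, Complex.real_smul]

lemma scaleX_dY (hu : Differentiable ℝ u) (p : Pt d m) (j : Fin m) :
    dY (scaleX d m t u) p j
      = (↑(t ^ ((d:ℝ)/2)) : ℂ) * dY u (t • p.1, p.2) j := by
  rw [dY, scaleX_fderiv hu]
  have h0 : scaleCLM d m t ((0, Pi.single j 1) : Pt d m) = ((0 : Fin d → ℝ), Pi.single j 1) := by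
    rw [scaleCLM_apply]; simp
  rw [ContinuousLinearMap.smul_apply, ContinuousLinearMap.comp_apply, h0, dY, smul_eq_mul]

lemma rpow_half_sq (ht : 0 < t) : (t ^ ((d:ℝ)/2)) ^ 2 = t ^ d := by
  have : (t ^ ((d:ℝ)/2)) ^ 2 = t ^ ((d:ℝ)/2) * t ^ ((d:ℝ)/2) := sq _
  rw [this, ← Real.rpow_add ht]
  have : (d:ℝ)/2 + (d:ℝ)/2 = (d:ℕ) := by push_cast; ring
  rw [this, Real.rpow_natCast]

lemma aesm_norm_sq (hu : InH1 d m α u) :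
    AEStronglyMeasurable (fun p : Pt d m => ‖u p‖ ^ 2) (μw d m) :=
  (hu.diff.continuous.norm.pow 2).aestronglyMeasurable

lemma aesm_norm_rpow (hu : InH1 d m α u) :
    AEStronglyMeasurable (fun p : Pt d m => ‖u p‖ ^ (α + 2)) (μw d m) := by
  have : Measurable fun p : Pt d m => ‖u p‖ ^ (α + 2) :=
    (hu.diff.continuous.norm.measurable).pow_const _
  exact this.aestronglyMeasurable

lemma aesm_gradX_sum (u : Pt d m → ℂ) :
    AEStronglyMeasurable (fun p : Pt d m => ∑ i, ‖dX u p i‖ ^ 2) (μw d m) := by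
  have : Measurable fun p : Pt d m => ∑ i, ‖dX u p i‖ ^ 2 := by
    apply Finset.measurable_sum
    intro i _
    exact ((measurable_fderiv_apply_const ℝ u _).norm).pow_const 2
  exact this.aestronglyMeasurable

lemma aesm_gradY_sum (u : Pt d m → ℂ) :
    AEStronglyMeasurable (fun p : Pt d m => ∑ j, ‖dY u p j‖ ^ 2) (μw d m) := by
  have : Measurable fun p : Pt d m => ∑ j, ‖dY u p j‖ ^ 2 := by
    apply Finset.measurable_sum
    intro j _
    exact ((measurable_fderiv_apply_const ℝ u _).norm).pow_const 2
  exact this.aestronglyMeasurable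

lemma mass_scaleX (hu : InH1 d m α u) (ht : 0 < t) :
    Mass d m (scaleX d m t u) = Mass d m u := by
  have hc : 0 < t ^ ((d:ℝ)/2) := Real.rpow_pos_of_pos ht _
  have h1 : (fun p : Pt d m => ‖scaleX d m t u p‖ ^ 2)
      = fun p => (t ^ ((d:ℝ)/2)) ^ 2 * ‖u (t • p.1, p.2)‖ ^ 2 := by
    funext p
    rw [scaleX, norm_real_mul, mul_pow, abs_of_pos hc]
  rw [Mass, h1, integral_const_mul, integral_scale ht (aesm_norm_sq hu), rpow_half_sq ht]
  rw [← mul_assoc, mul_inv_cancel₀ (by positivity : (t:ℝ)^d ≠ 0), one_mul]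
  rfl

lemma gradYsq_scaleX (hu : InH1 d m α u) (ht : 0 < t) :
    gradYsq d m (scaleX d m t u) = gradYsq d m u := by
  have hc : 0 < t ^ ((d:ℝ)/2) := Real.rpow_pos_of_pos ht _
  have h1 : (fun p : Pt d m => ∑ j, ‖dY (scaleX d m t u) p j‖ ^ 2)
      = fun p => (t ^ ((d:ℝ)/2)) ^ 2 * ∑ j, ‖dY u (t • p.1, p.2) j‖ ^ 2 := by
    funext p
    rw [Finset.mul_sum]
    congr 1; funext j
    rw [scaleX_dY hu.diff, norm_real_mul, mul_pow, abs_of_pos hc]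
  rw [gradYsq, h1, integral_const_mul, integral_scale ht (aesm_gradY_sum u), rpow_half_sq ht]
  rw [← mul_assoc, mul_inv_cancel₀ (by positivity : (t:ℝ)^d ≠ 0), one_mul]
  rfl

lemma gradXsq_scaleX (hu : InH1 d m α u) (ht : 0 < t) :
    gradXsq d m (scaleX d m t u) = t ^ 2 * gradXsq d m u := by
  have hc : 0 < t ^ ((d:ℝ)/2) := Real.rpow_pos_of_pos ht _
  have h1 : (fun p : Pt d m => ∑ i, ‖dX (scaleX d m t u) p i‖ ^ 2)
      = fun p => (t ^ ((d:ℝ)/2)) ^ 2 * t ^ 2 * ∑ i, ‖dX u (t • p.1, p.2) i‖ ^ 2 := by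
    funext p
    rw [Finset.mul_sum]
    congr 1; funext i
    rw [scaleX_dX hu.diff, norm_mul, norm_mul, Complex.norm_real, Complex.norm_real,
      Real.norm_eq_abs, Real.norm_eq_abs, abs_of_pos hc, abs_of_pos ht]
    ring
  rw [gradXsq, h1, integral_const_mul, integral_scale ht (aesm_gradX_sum u), rpow_half_sq ht]
  rw [gradXsq]
  field_simp

lemma pot_scaleX (hu : InH1 d m α u) (ht : 0 < t) (hα : 0 ≤ α + 2) :
    Pot d m α (scaleX d m t u) = t ^ ((d:ℝ) * α / 2) * Pot d m α u := by
  have hc : 0 < t ^ ((d:ℝ)/2) := Real.rpow_pos_of_pos ht _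
  have h1 : (fun p : Pt d m => ‖scaleX d m t u p‖ ^ (α + 2))
      = fun p => (t ^ ((d:ℝ)/2)) ^ (α + 2) * ‖u (t • p.1, p.2)‖ ^ (α + 2) := by
    funext p
    rw [scaleX, norm_real_mul, Real.mul_rpow (abs_nonneg _) (norm_nonneg _), abs_of_pos hc]
  rw [Pot, h1, integral_const_mul, integral_scale ht (aesm_norm_rpow hu)]
  rw [← Real.rpow_natCast t d, ← Real.rpow_neg ht.le, ← Real.rpow_mul ht.le, ← mul_assoc,
    ← Real.rpow_add ht]
  rw [Pot]
  congr 2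
  ring

lemma scaleX_ne_zero (ht : 0 < t) (h : u ≠ 0) : scaleX d m t u ≠ 0 := by
  obtain ⟨p, hp⟩ : ∃ p, u p ≠ 0 := by
    by_contra hc; push_neg at hc; exact h (funext fun p => hc p)
  intro hz
  have := congrFun hz (t⁻¹ • p.1, p.2)
  rw [scaleX] at this
  simp only [Pi.zero_apply, smul_inv_smul₀ (ne_of_gt ht)] at this
  rcases mul_eq_zero.1 this with h1 | h1
  · exact absurd (Complex.ofReal_eq_zero.1 h1)
      (ne_of_gt (Real.rpow_pos_of_pos ht _))
  · exact hp h1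

lemma inH1_scaleX (hu : InH1 d m α u) (ht : 0 < t) (hα : 0 ≤ α + 2) :
    InH1 d m α (scaleX d m t u) := by
  have hc : 0 < t ^ ((d:ℝ)/2) := Real.rpow_pos_of_pos ht _
  refine ⟨scaleX_differentiable hu.diff, ?_, ?_, ?_, ?_⟩
  · intro p k
    exact congrArg (fun z => (↑(t ^ ((d:ℝ)/2)) : ℂ) * z) (hu.periodic (t • p.1, p.2) k)
  · have h1 : (fun p : Pt d m => ‖scaleX d m t u p‖ ^ 2)
        = fun p => (t ^ ((d:ℝ)/2)) ^ 2 * ‖u (t • p.1, p.2)‖ ^ 2 := by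
      funext p
      rw [scaleX, norm_real_mul, mul_pow, abs_of_pos hc]
    rw [h1]
    exact (integrable_scale ht hu.memL2).const_mul _
  · -- gradient bound
    set D : ℝ := (t ^ ((d:ℝ)/2)) * max t 1 with hD
    have hDpos : 0 < D := mul_pos hc (lt_max_of_lt_right one_pos)
    have hbound : ∀ p : Pt d m, ‖fderiv ℝ (scaleX d m t u) p‖
        ≤ D * ‖fderiv ℝ u (t • p.1, p.2)‖ := by
      intro p
      rw [scaleX_fderiv hu.diff,
        norm_smul ((t ^ ((d:ℝ)/2) : ℝ) : ℂ) ((fderiv ℝ u (t • p.1, p.2)).comp (scaleCLM d m t)),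
        Complex.norm_real, Real.norm_eq_abs, abs_of_pos hc]
      have hA : ‖(scaleCLM d m t : Pt d m →L[ℝ] Pt d m)‖ ≤ max t 1 := by
        apply ContinuousLinearMap.opNorm_le_bound _ (le_max_of_le_right zero_le_one)
        intro h
        rw [scaleCLM_apply]
        have h1 : ‖((t • h.1, h.2) : Pt d m)‖ = max ‖t • h.1‖ ‖h.2‖ := rfl
        rw [h1, norm_smul, Real.norm_eq_abs, abs_of_pos ht]
        have hh : ‖h‖ = max ‖h.1‖ ‖h.2‖ := rfl
        apply max_le
        · calc t * ‖h.1‖ ≤ max t 1 * ‖h.1‖ :=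
                mul_le_mul_of_nonneg_right (le_max_left _ _) (norm_nonneg _)
            _ ≤ max t 1 * ‖h‖ := by
                apply mul_le_mul_of_nonneg_left _ (le_max_of_le_right zero_le_one)
                rw [hh]; exact le_max_left _ _
        · calc ‖h.2‖ ≤ ‖h‖ := by rw [hh]; exact le_max_right _ _
            _ ≤ max t 1 * ‖h‖ := le_mul_of_one_le_left (norm_nonneg _) (le_max_right _ _)
      calc t ^ ((d:ℝ)/2) * ‖(fderiv ℝ u (t • p.1, p.2)).comp (scaleCLM d m t)‖
          ≤ t ^ ((d:ℝ)/2) * (‖fderiv ℝ u (t • p.1, p.2)‖ * ‖(scaleCLM d m t : Pt d m →L[ℝ] Pt d m)‖) :=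
            mul_le_mul_of_nonneg_left (ContinuousLinearMap.opNorm_comp_le _ _) hc.le
        _ ≤ t ^ ((d:ℝ)/2) * (‖fderiv ℝ u (t • p.1, p.2)‖ * max t 1) := by
            apply mul_le_mul_of_nonneg_left _ hc.le
            exact mul_le_mul_of_nonneg_left hA (norm_nonneg _)
        _ = D * ‖fderiv ℝ u (t • p.1, p.2)‖ := by rw [hD]; ring
    have hint : Integrable (fun p : Pt d m => D ^ 2 * ‖fderiv ℝ u (t • p.1, p.2)‖ ^ 2)
        (μw d m) := (integrable_scale ht hu.memGradL2).const_mul _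
    apply hint.mono
    · exact ((measurable_fderiv ℝ (scaleX d m t u)).norm.pow_const 2).aestronglyMeasurable
    · refine Filter.Eventually.of_forall fun p => ?_
      rw [Real.norm_eq_abs, Real.norm_eq_abs, abs_of_nonneg (by positivity),
        abs_of_nonneg (by positivity)]
      calc ‖fderiv ℝ (scaleX d m t u) p‖ ^ 2 ≤ (D * ‖fderiv ℝ u (t • p.1, p.2)‖) ^ 2 := by
            apply pow_le_pow_left₀ (norm_nonneg _) (hbound p)
        _ = D ^ 2 * ‖fderiv ℝ u (t • p.1, p.2)‖ ^ 2 := by ring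
  · have h1 : (fun p : Pt d m => ‖scaleX d m t u p‖ ^ (α + 2))
        = fun p => (t ^ ((d:ℝ)/2)) ^ (α + 2) * ‖u (t • p.1, p.2)‖ ^ (α + 2) := by
      funext p
      rw [scaleX, norm_real_mul, Real.mul_rpow (abs_nonneg _) (norm_nonneg _), abs_of_pos hc]
    rw [h1]
    exact (integrable_scale ht hu.memLp).const_mul _

end NLS
namespace NLS

variable {d m : ℕ} {α ω : ℝ} {u : Pt d m → ℂ} {ξ : ℝ} {i0 : Fin d}

/-- Modulation `e^{iξ x_{i0}} u`. -/
def modFun (d m : ℕ) (ξ : ℝ) (i0 : Fin d) (u : Pt d m → ℂ) : Pt d m → ℂ :=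
  fun p => Complex.exp (Complex.I * ξ * (p.1 i0 : ℂ)) * u p

/-- The linear phase as a continuous linear map. -/
def phaseCLM (d m : ℕ) (ξ : ℝ) (i0 : Fin d) : Pt d m →L[ℝ] ℂ :=
  (Complex.I * ξ) • (Complex.ofRealCLM.comp ((ContinuousLinearMap.proj i0).comp
    (ContinuousLinearMap.fst ℝ (Fin d → ℝ) (Fin m → ℝ))))

lemma phaseCLM_apply (p : Pt d m) : phaseCLM d m ξ i0 p = Complex.I * ξ * (p.1 i0 : ℂ) := by
  simp [phaseCLM, smul_eq_mul]

lemma norm_phase (p : Pt d m) : ‖Complex.exp (Complex.I * ξ * (p.1 i0 : ℂ))‖ = 1 := by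
  rw [Complex.norm_exp]
  have : (Complex.I * ξ * (p.1 i0 : ℂ)).re = 0 := by
    simp [Complex.mul_re]
  rw [this, Real.exp_zero]

lemma norm_modFun (p : Pt d m) : ‖modFun d m ξ i0 u p‖ = ‖u p‖ := by
  rw [modFun, norm_mul, norm_phase, one_mul]

lemma modFun_hasFDerivAt (hu : Differentiable ℝ u) (p : Pt d m) :
    HasFDerivAt (modFun d m ξ i0 u)
      (Complex.exp (Complex.I * ξ * (p.1 i0 : ℂ)) • fderiv ℝ u p
        + u p • (Complex.exp (Complex.I * ξ * (p.1 i0 : ℂ)) • phaseCLM d m ξ i0)) p := by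
  have hg : HasFDerivAt (fun q : Pt d m => Complex.I * ξ * (q.1 i0 : ℂ))
      (phaseCLM d m ξ i0) p := by
    have := (phaseCLM d m ξ i0).hasFDerivAt (x := p)
    apply this.congr_of_eventuallyEq
    filter_upwards with q
    rw [phaseCLM_apply]
  have hE : HasFDerivAt (fun q : Pt d m => Complex.exp (Complex.I * ξ * (q.1 i0 : ℂ)))
      (Complex.exp (Complex.I * ξ * (p.1 i0 : ℂ)) • phaseCLM d m ξ i0) p := hg.cexp
  exact hE.mul (hu p).hasFDerivAt

lemma modFun_differentiable (hu : Differentiable ℝ u) :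
    Differentiable ℝ (modFun d m ξ i0 u) :=
  fun p => (modFun_hasFDerivAt hu p).differentiableAt

lemma modFun_fderiv (hu : Differentiable ℝ u) (p : Pt d m) :
    fderiv ℝ (modFun d m ξ i0 u) p
      = Complex.exp (Complex.I * ξ * (p.1 i0 : ℂ)) • fderiv ℝ u p
        + u p • (Complex.exp (Complex.I * ξ * (p.1 i0 : ℂ)) • phaseCLM d m ξ i0) :=
  (modFun_hasFDerivAt hu p).fderiv

lemma modFun_dX (hu : Differentiable ℝ u) (p : Pt d m) (i : Fin d) :
    dX (modFun d m ξ i0 u) p i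
      = Complex.exp (Complex.I * ξ * (p.1 i0 : ℂ))
        * (dX u p i + u p * (Complex.I * ξ * (if i = i0 then 1 else 0))) := by
  rw [dX, modFun_fderiv hu]
  have h1 : phaseCLM d m ξ i0 ((Pi.single i 1, 0) : Pt d m)
      = Complex.I * ξ * (if i = i0 then 1 else 0) := by
    rw [phaseCLM_apply]
    simp only
    rw [Pi.single_apply]
    by_cases hii : i0 = i
    · subst hii; simp
    · rw [if_neg hii, if_neg (fun hh => hii hh.symm)]
      simp
  simp only [ContinuousLinearMap.add_apply, ContinuousLinearMap.smul_apply, h1, smul_eq_mul]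
  rw [dX]
  ring

lemma modFun_dY (hu : Differentiable ℝ u) (p : Pt d m) (j : Fin m) :
    dY (modFun d m ξ i0 u) p j
      = Complex.exp (Complex.I * ξ * (p.1 i0 : ℂ)) * dY u p j := by
  rw [dY, modFun_fderiv hu]
  have h1 : phaseCLM d m ξ i0 ((0, Pi.single j 1) : Pt d m) = 0 := by
    rw [phaseCLM_apply]
    simp
  simp only [ContinuousLinearMap.add_apply, ContinuousLinearMap.smul_apply, h1, smul_eq_mul,
    mul_zero, add_zero]
  rw [dY]

lemma norm_phaseCLM_le : ‖(phaseCLM d m ξ i0 : Pt d m →L[ℝ] ℂ)‖ ≤ |ξ| := by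
  apply ContinuousLinearMap.opNorm_le_bound _ (abs_nonneg _)
  intro h
  rw [phaseCLM_apply]
  rw [norm_mul, norm_mul, Complex.norm_I, one_mul, Complex.norm_real, Complex.norm_real,
    Real.norm_eq_abs, Real.norm_eq_abs]
  have h1 : |h.1 i0| ≤ ‖h‖ := by
    calc |h.1 i0| = ‖h.1 i0‖ := rfl
      _ ≤ ‖h.1‖ := norm_le_pi_norm h.1 i0
      _ ≤ ‖h‖ := by
          have : ‖h‖ = max ‖h.1‖ ‖h.2‖ := rfl
          rw [this]; exact le_max_left _ _
  exact mul_le_mul_of_nonneg_left h1 (abs_nonneg _)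

lemma mass_modFun : Mass d m (modFun d m ξ i0 u) = Mass d m u := by
  rw [Mass, Mass]
  congr 1; funext p
  rw [norm_modFun]

lemma pot_modFun : Pot d m α (modFun d m ξ i0 u) = Pot d m α u := by
  rw [Pot, Pot]
  congr 1; funext p
  rw [norm_modFun]

lemma gradYsq_modFun (hu : Differentiable ℝ u) :
    gradYsq d m (modFun d m ξ i0 u) = gradYsq d m u := by
  rw [gradYsq, gradYsq]
  congr 1; funext p
  congr 1; funext j
  rw [modFun_dY hu, norm_mul, norm_phase, one_mul]

lemma inH1_modFun (hu : InH1 d m α u) : InH1 d m α (modFun d m ξ i0 u) := by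
  refine ⟨modFun_differentiable hu.diff, ?_, ?_, ?_, ?_⟩
  · intro p k
    rw [modFun, modFun]
    simp only
    rw [hu.periodic p k]
  · have : (fun p : Pt d m => ‖modFun d m ξ i0 u p‖ ^ 2) = fun p => ‖u p‖ ^ 2 := by
      funext p; rw [norm_modFun]
    rw [this]; exact hu.memL2
  · have hbound : ∀ p : Pt d m, ‖fderiv ℝ (modFun d m ξ i0 u) p‖
        ≤ ‖fderiv ℝ u p‖ + |ξ| * ‖u p‖ := by
      intro p
      rw [modFun_fderiv hu.diff]
      calc ‖Complex.exp (Complex.I * ξ * (p.1 i0 : ℂ)) • fderiv ℝ u p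
            + u p • (Complex.exp (Complex.I * ξ * (p.1 i0 : ℂ)) • phaseCLM d m ξ i0)‖
          ≤ ‖Complex.exp (Complex.I * ξ * (p.1 i0 : ℂ)) • fderiv ℝ u p‖
            + ‖u p • (Complex.exp (Complex.I * ξ * (p.1 i0 : ℂ)) • phaseCLM d m ξ i0)‖ :=
            norm_add_le _ _
        _ ≤ ‖fderiv ℝ u p‖ + |ξ| * ‖u p‖ := by
            rw [norm_smul (Complex.exp (Complex.I * ξ * (p.1 i0 : ℂ))) (fderiv ℝ u p),
              norm_smul (u p)
                (Complex.exp (Complex.I * ξ * (p.1 i0 : ℂ)) • phaseCLM d m ξ i0),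
              norm_smul (Complex.exp (Complex.I * ξ * (p.1 i0 : ℂ)))
                (phaseCLM d m ξ i0 : Pt d m →L[ℝ] ℂ),
              norm_phase, one_mul, one_mul]
            apply add_le_add le_rfl
            calc ‖u p‖ * ‖(phaseCLM d m ξ i0 : Pt d m →L[ℝ] ℂ)‖ ≤ ‖u p‖ * |ξ| :=
                  mul_le_mul_of_nonneg_left norm_phaseCLM_le (norm_nonneg _)
              _ = |ξ| * ‖u p‖ := mul_comm _ _
    have hint : Integrable (fun p : Pt d m =>
        2 * ‖fderiv ℝ u p‖ ^ 2 + 2 * (ξ ^ 2 * ‖u p‖ ^ 2)) (μw d m) :=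
      (hu.memGradL2.const_mul 2).add ((hu.memL2.const_mul _).const_mul 2)
    apply hint.mono
    · exact ((measurable_fderiv ℝ (modFun d m ξ i0 u)).norm.pow_const 2).aestronglyMeasurable
    · refine Filter.Eventually.of_forall fun p => ?_
      rw [Real.norm_eq_abs, Real.norm_eq_abs, abs_of_nonneg (by positivity),
        abs_of_nonneg (by positivity)]
      have h1 := hbound p
      have h2 : ‖fderiv ℝ (modFun d m ξ i0 u) p‖ ^ 2 ≤ (‖fderiv ℝ u p‖ + |ξ| * ‖u p‖) ^ 2 :=
        pow_le_pow_left₀ (norm_nonneg _) h1 2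
      have h3 : (‖fderiv ℝ u p‖ + |ξ| * ‖u p‖) ^ 2
          ≤ 2 * ‖fderiv ℝ u p‖ ^ 2 + 2 * (ξ ^ 2 * ‖u p‖ ^ 2) := by
        have : |ξ| ^ 2 = ξ ^ 2 := sq_abs ξ
        nlinarith [sq_nonneg (‖fderiv ℝ u p‖ - |ξ| * ‖u p‖)]
      linarith
  · have : (fun p : Pt d m => ‖modFun d m ξ i0 u p‖ ^ (α + 2))
        = fun p => ‖u p‖ ^ (α + 2) := by
      funext p; rw [norm_modFun]
    rw [this]; exact hu.memLp

lemma modFun_ne_zero (h : u ≠ 0) : modFun d m ξ i0 u ≠ 0 := by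
  obtain ⟨p, hp⟩ : ∃ p, u p ≠ 0 := by
    by_contra hc; push_neg at hc; exact h (funext fun p => hc p)
  intro hz
  have := congrFun hz p
  rw [modFun] at this
  simp only [Pi.zero_apply, mul_eq_zero] at this
  rcases this with h1 | h1
  · exact Complex.exp_ne_zero _ h1
  · exact hp h1

lemma dX_ae_zero (hu : InH1 d m α u) (ha : gradXsq d m u = 0) :
    ∀ᵐ p ∂(μw d m), ∀ i, dX u p i = 0 := by
  have hbound : ∀ p : Pt d m, ∑ i, ‖dX u p i‖ ^ 2 ≤ (d : ℝ) * ‖fderiv ℝ u p‖ ^ 2 := by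
    intro p
    calc ∑ i, ‖dX u p i‖ ^ 2 ≤ ∑ _i : Fin d, ‖fderiv ℝ u p‖ ^ 2 := by
          apply Finset.sum_le_sum
          intro i _
          apply pow_le_pow_left₀ (norm_nonneg _)
          rw [dX]
          calc ‖fderiv ℝ u p ((Pi.single i 1, 0) : Pt d m)‖
              ≤ ‖fderiv ℝ u p‖ * ‖((Pi.single i 1, 0) : Pt d m)‖ :=
                ContinuousLinearMap.le_opNorm _ _
            _ ≤ ‖fderiv ℝ u p‖ * 1 := by
                apply mul_le_mul_of_nonneg_left _ (norm_nonneg _)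
                have h1 : ‖((Pi.single i 1, 0) : Pt d m)‖
                    = max ‖(Pi.single i 1 : Fin d → ℝ)‖ ‖(0 : Fin m → ℝ)‖ := rfl
                rw [h1, norm_zero]
                apply max_le _ zero_le_one
                rw [Pi.norm_single]
                simp
            _ = ‖fderiv ℝ u p‖ := mul_one _
      _ = (d : ℝ) * ‖fderiv ℝ u p‖ ^ 2 := by
          rw [Finset.sum_const, Finset.card_univ, Fintype.card_fin, nsmul_eq_mul]
  have hint : Integrable (fun p : Pt d m => ∑ i, ‖dX u p i‖ ^ 2) (μw d m) := by
    apply (hu.memGradL2.const_mul (d : ℝ)).mono (aesm_gradX_sum u)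
    refine Filter.Eventually.of_forall fun p => ?_
    rw [Real.norm_eq_abs, Real.norm_eq_abs,
      abs_of_nonneg (Finset.sum_nonneg fun i _ => by positivity),
      abs_of_nonneg (by positivity)]
    exact hbound p
  have h0 : (fun p : Pt d m => ∑ i, ‖dX u p i‖ ^ 2) =ᵐ[μw d m] 0 :=
    (integral_eq_zero_iff_of_nonneg
      (fun p => Finset.sum_nonneg fun i _ => by positivity) hint).1 ha
  filter_upwards [h0] with p hp
  intro i
  have : ∀ j ∈ Finset.univ, (0:ℝ) ≤ ‖dX u p j‖ ^ 2 := fun j _ => by positivity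
  have hz := (Finset.sum_eq_zero_iff_of_nonneg this).1 hp i (Finset.mem_univ i)
  have : ‖dX u p i‖ = 0 := by
    nlinarith [norm_nonneg (dX u p i)]
  exact norm_eq_zero.1 this

lemma gradXsq_modFun_of_zero (hu : InH1 d m α u) (ha : gradXsq d m u = 0) :
    gradXsq d m (modFun d m ξ i0 u) = ξ ^ 2 * Mass d m u := by
  rw [gradXsq, Mass, ← integral_const_mul]
  apply integral_congr_ae
  filter_upwards [dX_ae_zero hu ha] with p hp
  rw [show ∑ i, ‖dX (modFun d m ξ i0 u) p i‖ ^ 2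
      = ∑ i, (if i = i0 then ξ ^ 2 * ‖u p‖ ^ 2 else 0) from ?_]
  · rw [Finset.sum_ite_eq' Finset.univ i0 fun _ => ξ ^ 2 * ‖u p‖ ^ 2]
    simp
  · congr 1; funext i
    rw [modFun_dX hu.diff, hp i, zero_add, norm_mul, norm_phase, one_mul]
    split
    · rw [mul_one, norm_mul, norm_mul, Complex.norm_I, one_mul, Complex.norm_real,
        Real.norm_eq_abs, mul_pow, sq_abs]
      ring
    · rw [mul_zero, mul_zero, norm_zero]
      rw [zero_pow]
      norm_num

end NLS
namespace NLS

variable {d m : ℕ} {α ω : ℝ} {u : Pt d m → ℂ}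

lemma rpow_add_two {l : ℝ} (hl : 0 < l) (a : ℝ) : l ^ (a + 2) = l ^ a * l ^ 2 := by
  rw [Real.rpow_add hl]
  congr 1
  rw [show (2:ℝ) = ((2:ℕ):ℝ) by norm_num, Real.rpow_natCast]

lemma rpow_inv_self {A : ℝ} (hA : 0 < A) {a : ℝ} (ha : a ≠ 0) : (A ^ (1/a)) ^ a = A := by
  rw [← Real.rpow_mul hA.le, one_div, inv_mul_cancel₀ ha, Real.rpow_one]

lemma young_aux {l : ℝ} (hl : 0 ≤ l) {a : ℝ} (ha : 0 < a) :
    l ^ 2 ≤ 2/(a+2) * l ^ (a + 2) + a/(a+2) := by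
  have h2 : (0:ℝ) < a + 2 := by linarith
  have key := Real.geom_mean_le_arith_mean2_weighted
    (by positivity : (0:ℝ) ≤ 2/(a+2)) (by positivity : (0:ℝ) ≤ a/(a+2))
    (Real.rpow_nonneg hl (a+2)) (zero_le_one)
    (by field_simp; ring : 2/(a+2) + a/(a+2) = 1)
  rw [Real.one_rpow, mul_one] at key
  calc l ^ 2 = (l ^ (a+2)) ^ (2/(a+2)) := by
        rw [← Real.rpow_natCast l 2, ← Real.rpow_mul hl]
        congr 1
        field_simp
        norm_num
    _ ≤ 2/(a+2) * l ^ (a+2) + a/(a+2) * 1 := key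
    _ = 2/(a+2) * l ^ (a+2) + a/(a+2) := by rw [mul_one]

lemma bernoulli_aux {r : ℝ} (hr : 0 ≤ r) {q : ℝ} (hq : 1 ≤ q) :
    1 + q * (r - 1) ≤ r ^ q := by
  have := one_add_mul_self_le_rpow_one_add (by linarith : (-1:ℝ) ≤ r - 1) hq
  rwa [show (1:ℝ) + (r - 1) = r by ring] at this

/-- From an element of the Nehari constraint set, construct an element of the
virial constraint set with no larger action. -/
lemma gammaSet_le_of_nehari (hd : 1 ≤ d)
    (hα0 : 0 < α) (hαd : 4 ≤ α * d) (hω : 0 < ω)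
    (hu : InH1 d m α u) (hu0 : u ≠ 0) (hN : Nw d m α ω u = 0) :
    ∃ r' ∈ gammaSet d m α ω, r' ≤ Sw d m α ω u := by
  have hα2 : (0:ℝ) < α + 2 := by linarith
  set cK : ℝ := α * d / (2 * (α + 2)) with hcK
  have hd0 : (0:ℝ) < d := by
    have : (1:ℝ) ≤ d := by exact_mod_cast hd
    linarith
  have hcK_pos : 0 < cK := by
    rw [hcK]; positivity
  set M := Mass d m u with hM
  set a := gradXsq d m u with ha
  set b := gradYsq d m u with hb
  set P := Pot d m α u with hP
  have hMpos : 0 < M := mass_pos hu hu0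
  have hPpos : 0 < P := pot_pos (by linarith) hu hu0
  have hbnn : 0 ≤ b := gradYsq_nonneg u
  have hann : 0 ≤ a := gradXsq_nonneg u
  have hNP : P = ω * M + a + b := by
    rw [Nw] at hN; rw [hM, ha, hb, hP]; linarith
  have hSu : Sw d m α ω u = P / 2 - P / (α + 2) := by
    rw [Sw, En, ← ha, ← hb, ← hP, ← hM, hNP]; ring
  have hSpos : 0 < Sw d m α ω u := by
    rw [hSu]
    have : P / (α+2) < P / 2 := by
      apply div_lt_div_of_pos_left hPpos (by norm_num)
      linarith
    linarith
  -- the element we will scale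
  rcases eq_or_lt_of_le hann with haz | hapos
  · -- degenerate case a = 0 : modulate
    set i0 : Fin d := ⟨0, hd⟩ with hi0
    -- choose small ξ
    have hcont : ContinuousAt (fun ξ : ℝ =>
        (((ξ^2 * M) / (cK * P)) ^ (1/α)) ^ 2 * (ω * M + ξ^2 * M + b) / 2) 0 := by
      have h1 : ContinuousAt (fun ξ : ℝ => (ξ^2 * M) / (cK * P)) 0 := by fun_prop
      have h2 : ContinuousAt (fun ξ : ℝ => ((ξ^2 * M) / (cK * P)) ^ (1/α)) 0 :=
        h1.rpow_const (Or.inr (by positivity))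
      exact (((h2.pow 2).mul (by fun_prop)).div_const 2)
    have hval0 : ((((0:ℝ)^2 * M) / (cK * P)) ^ (1/α)) ^ 2 * (ω * M + (0:ℝ)^2 * M + b) / 2
        = 0 := by
      rw [show (((0:ℝ)^2 * M) / (cK * P)) = 0 by norm_num,
        Real.zero_rpow (by positivity : 1/α ≠ 0)]
      norm_num
    have hev : ∀ᶠ ξ in 𝓝 (0:ℝ),
        (((ξ^2 * M) / (cK * P)) ^ (1/α)) ^ 2 * (ω * M + ξ^2 * M + b) / 2 < Sw d m α ω u := by
      have h := hcont.tendsto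
      rw [hval0] at h
      exact h.eventually_lt_const hSpos
    obtain ⟨ξ, hξ, hξS⟩ : ∃ ξ : ℝ, 0 < ξ ∧
        (((ξ^2 * M) / (cK * P)) ^ (1/α)) ^ 2 * (ω * M + ξ^2 * M + b) / 2 < Sw d m α ω u := by
      have : ∀ᶠ ξ in 𝓝[>] (0:ℝ),
          (((ξ^2 * M) / (cK * P)) ^ (1/α)) ^ 2 * (ω * M + ξ^2 * M + b) / 2 < Sw d m α ω u :=
        hev.filter_mono nhdsWithin_le_nhds
      obtain ⟨ξ, hξmem, hξlt⟩ := (this.and self_mem_nhdsWithin).exists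
      exact ⟨ξ, hξlt, hξmem⟩
    -- the modulated function
    set w := modFun d m ξ i0 u with hw
    have hwIn : InH1 d m α w := inH1_modFun hu
    have hw0 : w ≠ 0 := modFun_ne_zero hu0
    have hwa : gradXsq d m w = ξ^2 * M := gradXsq_modFun_of_zero hu haz.symm
    have hwb : gradYsq d m w = b := gradYsq_modFun hu.diff
    have hwM : Mass d m w = M := mass_modFun
    have hwP : Pot d m α w = P := pot_modFun
    set A : ℝ := (ξ^2 * M) / (cK * P) with hA
    have hApos : 0 < A := by rw [hA]; positivity
    set l : ℝ := A ^ (1/α) with hl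
    have hlpos : 0 < l := Real.rpow_pos_of_pos hApos _
    have hlα : l ^ α = A := rpow_inv_self hApos (ne_of_gt hα0)
    set v : Pt d m → ℂ := fun p => (l : ℂ) * w p with hv
    have hvIn : InH1 d m α v := inH1_smul hwIn (by linarith) hlpos
    have hv0 : v ≠ 0 := smul_ne_zero' (ne_of_gt hlpos) hw0
    have hva : gradXsq d m v = l^2 * (ξ^2 * M) := by rw [hv, gradXsq_smul hwIn.diff hlpos, hwa]
    have hvb : gradYsq d m v = l^2 * b := by rw [hv, gradYsq_smul hwIn.diff hlpos, hwb]
    have hvM : Mass d m v = l^2 * M := by rw [hv, mass_smul hlpos, hwM]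
    have hvP : Pot d m α v = l^(α+2) * P := by rw [hv, pot_smul (by linarith) hlpos, hwP]
    have hlP : l ^ (α + 2) * (cK * P) = l ^ 2 * (ξ^2 * M) := by
      rw [rpow_add_two hlpos, hlα, hA]
      field_simp
    have hKv : Kw d m α v = 0 := by
      rw [Kw, hva, hvP, ← hcK]
      have : cK * (l^(α+2) * P) = l^(α+2) * (cK * P) := by ring
      rw [this, hlP]
      ring
    refine ⟨Sw d m α ω v, ⟨v, ⟨hvIn, hv0, hKv⟩, rfl⟩, ?_⟩
    have hSv : Sw d m α ω v = l^2 * (ω * M + ξ^2 * M + b) / 2 - l^(α+2) * P / (α+2) := by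
      rw [Sw, En, hva, hvb, hvP, hvM]; ring
    have hdrop : Sw d m α ω v ≤ l^2 * (ω * M + ξ^2 * M + b) / 2 := by
      rw [hSv]
      have : 0 ≤ l^(α+2) * P / (α+2) := by positivity
      linarith
    calc Sw d m α ω v ≤ l^2 * (ω * M + ξ^2 * M + b) / 2 := hdrop
      _ = (((ξ^2 * M) / (cK * P)) ^ (1/α)) ^ 2 * (ω * M + ξ^2 * M + b) / 2 := by
          rw [hl, hA]
      _ ≤ Sw d m α ω u := le_of_lt hξS
  · -- main case a > 0 : pure rescaling
    set A : ℝ := a / (cK * P) with hA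
    have hApos : 0 < A := by rw [hA]; positivity
    set l : ℝ := A ^ (1/α) with hl
    have hlpos : 0 < l := Real.rpow_pos_of_pos hApos _
    have hlα : l ^ α = A := rpow_inv_self hApos (ne_of_gt hα0)
    set v : Pt d m → ℂ := fun p => (l : ℂ) * u p with hv
    have hvIn : InH1 d m α v := inH1_smul hu (by linarith) hlpos
    have hv0 : v ≠ 0 := smul_ne_zero' (ne_of_gt hlpos) hu0
    have hva : gradXsq d m v = l^2 * a := by rw [hv, gradXsq_smul hu.diff hlpos, ha]
    have hvb : gradYsq d m v = l^2 * b := by rw [hv, gradYsq_smul hu.diff hlpos, hb]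
    have hvM : Mass d m v = l^2 * M := by rw [hv, mass_smul hlpos, hM]
    have hvP : Pot d m α v = l^(α+2) * P := by rw [hv, pot_smul (by linarith) hlpos, hP]
    have hlP : l ^ (α + 2) * (cK * P) = l ^ 2 * a := by
      rw [rpow_add_two hlpos, hlα, hA]
      field_simp
    have hKv : Kw d m α v = 0 := by
      rw [Kw, hva, hvP, ← hcK]
      have : cK * (l^(α+2) * P) = l^(α+2) * (cK * P) := by ring
      rw [this, hlP]
      ring
    refine ⟨Sw d m α ω v, ⟨v, ⟨hvIn, hv0, hKv⟩, rfl⟩, ?_⟩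
    have hSv : Sw d m α ω v = l^2 * P / 2 - l^(α+2) * P / (α+2) := by
      rw [Sw, En, hva, hvb, hvP, hvM, hNP]; ring
    have hyoung := young_aux hlpos.le hα0
    have : l^2 * P / 2 - l^(α+2) * P / (α+2) ≤ P / 2 - P / (α+2) := by
      have h1 : l^2 * P ≤ (2/(α+2) * l^(α+2) + α/(α+2)) * P :=
        mul_le_mul_of_nonneg_right hyoung hPpos.le
      have h2 : (2/(α+2) * l^(α+2) + α/(α+2)) * P / 2 - l^(α+2) * P / (α+2)
          = α/(α+2) * P / 2 := by ring
      have h3 : α/(α+2) * P / 2 = P / 2 - P / (α+2) := by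
        field_simp
        try ring
      linarith [div_le_div_of_nonneg_right (c := 2) h1 (by norm_num)]
    rw [hSv, hSu]
    exact this

end NLS
namespace NLS

variable {d m : ℕ} {α ω : ℝ} {u : Pt d m → ℂ}

/-- From an element of the virial constraint set, construct an element of the
Nehari constraint set with no larger action. -/
lemma betaSet_le_of_virial (hd : 1 ≤ d)
    (hα0 : 0 < α) (hαd : 4 ≤ α * d) (hcK1 : α * d / (2 * (α + 2)) < 1) (hω : 0 < ω)
    (hu : InH1 d m α u) (hu0 : u ≠ 0) (hK : Kw d m α u = 0) :
    ∃ r' ∈ betaSet d m α ω, r' ≤ Sw d m α ω u := by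
  have hα2 : (0:ℝ) < α + 2 := by linarith
  set cK : ℝ := α * d / (2 * (α + 2)) with hcK
  have hd0 : (0:ℝ) < d := by
    have : (1:ℝ) ≤ d := by exact_mod_cast hd
    linarith
  have hcK_pos : 0 < cK := by rw [hcK]; positivity
  set M := Mass d m u with hM
  set a := gradXsq d m u with ha
  set b := gradYsq d m u with hb
  set P := Pot d m α u with hP
  have hMpos : 0 < M := mass_pos hu hu0
  have hPpos : 0 < P := pot_pos (by linarith) hu hu0
  have hbnn : 0 ≤ b := gradYsq_nonneg u
  have haK : a = cK * P := by
    rw [Kw] at hK; rw [ha, hP, hcK]; linarith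
  set s : ℝ := (d:ℝ) * α / 2 with hs
  have hs2 : 2 ≤ s := by rw [hs]; nlinarith
  have hs0 : 0 < s := by linarith
  set q : ℝ := (d:ℝ) * α / 4 with hq
  have hq1 : 1 ≤ q := by rw [hq]; nlinarith
  have h2q : 2 * q = s := by rw [hq, hs]; ring
  have hqc : q / (α + 2) = cK / 2 := by
    rw [hq, hcK]
    field_simp
    ring
  -- the Nehari value along the scaling flow
  set g : ℝ → ℝ := fun t => ω * M + t^2 * a + b - t ^ s * P with hg
  have hgc : Continuous g := by
    have hrs : Continuous fun t : ℝ => t ^ s :=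
      continuous_iff_continuousAt.2 fun t => Real.continuousAt_rpow_const t s (Or.inr hs0.le)
    rw [hg]
    exact ((continuous_const.add ((continuous_pow 2).mul continuous_const)).add
      continuous_const).sub (hrs.mul continuous_const)
  have hg1 : g 1 = ω * M + a + b - P := by
    rw [hg]; simp [Real.one_rpow]
  -- main construction given a root of `g` in `(0, ∞)`
  have main : ∀ t0 : ℝ, 0 < t0 → g t0 = 0 → ∃ r' ∈ betaSet d m α ω, r' ≤ Sw d m α ω u := by
    intro t0 ht0 hgt0
    set v := scaleX d m t0 u with hv
    have hvIn : InH1 d m α v := inH1_scaleX hu ht0 (by linarith)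
    have hv0 : v ≠ 0 := scaleX_ne_zero ht0 hu0
    have hva : gradXsq d m v = t0^2 * a := by rw [hv, gradXsq_scaleX hu ht0, ha]
    have hvb : gradYsq d m v = b := by rw [hv, gradYsq_scaleX hu ht0, hb]
    have hvM : Mass d m v = M := by rw [hv, mass_scaleX hu ht0, hM]
    have hvP : Pot d m α v = t0 ^ s * P := by
      rw [hv, pot_scaleX hu ht0 (by linarith), hP, hs]
    have hgt0' : ω * M + t0 ^ 2 * a + b - t0 ^ s * P = 0 := hgt0
    have hNv : Nw d m α ω v = 0 := by
      rw [Nw, hva, hvb, hvM, hvP]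
      linarith
    refine ⟨Sw d m α ω v, ⟨v, ⟨hvIn, hv0, hNv⟩, rfl⟩, ?_⟩
    -- Bernoulli comparison
    have hber : 1 + q * (t0^2 - 1) ≤ (t0^2) ^ q := bernoulli_aux (by positivity) hq1
    have hrq : ((t0^2 : ℝ)) ^ q = t0 ^ s := by
      rw [← Real.rpow_natCast t0 2, ← Real.rpow_mul ht0.le]
      rw [← h2q]
      norm_num
    rw [hrq] at hber
    have h5 : q * (t0^2 - 1) / (α + 2) ≤ (t0 ^ s - 1) / (α + 2) :=
      (div_le_div_iff_of_pos_right hα2).2 (by linarith)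
    have h6 : q * (t0^2 - 1) / (α + 2) = (t0^2 - 1) * (cK / 2) := by
      rw [mul_comm q, mul_div_assoc, hqc]
    have hE : 0 ≤ (1 - t0^2) * cK / 2 + (t0 ^ s - 1) / (α + 2) := by
      have : (1 - t0^2) * cK / 2 + (t0^2 - 1) * (cK / 2) = 0 := by ring
      linarith
    have hkey : 0 ≤ (1 - t0^2) * a / 2 + (t0 ^ s - 1) * P / (α + 2) := by
      rw [haK]
      have hfac : (1 - t0^2) * (cK * P) / 2 + (t0 ^ s - 1) * P / (α + 2)
          = P * ((1 - t0^2) * cK / 2 + (t0 ^ s - 1) / (α + 2)) := by ring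
      rw [hfac]
      exact mul_nonneg hPpos.le hE
    have hSu : Sw d m α ω u = (a + b) / 2 - P / (α + 2) + ω / 2 * M := by
      rw [Sw, En, ← ha, ← hb, ← hP, ← hM]
    have hSv : Sw d m α ω v = (t0^2 * a + b) / 2 - t0 ^ s * P / (α + 2) + ω / 2 * M := by
      rw [Sw, En, hva, hvb, hvP, hvM]
    have hlin : (a + b) / 2 - P / (α + 2) + ω / 2 * M
        - ((t0^2 * a + b) / 2 - t0 ^ s * P / (α + 2) + ω / 2 * M)
        = (1 - t0^2) * a / 2 + (t0 ^ s - 1) * P / (α + 2) := by ring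
    rw [hSu, hSv]
    linarith
  -- trichotomy on the sign of the Nehari functional of `u`
  rcases lt_trichotomy (g 1) 0 with hg1n | hg1n | hg1n
  · -- scale down: root in (0, 1)
    have hg0 : 0 < g 0 := by
      rw [hg]
      simp only [zero_pow, ne_eq, OfNat.ofNat_ne_zero, not_false_iff, zero_mul, add_zero,
        Real.zero_rpow (ne_of_gt hs0)]
      have := mul_pos hω hMpos
      linarith
    have hivt := intermediate_value_Ioo' (by norm_num : (0:ℝ) ≤ 1) hgc.continuousOn
    have h0mem : (0:ℝ) ∈ Set.Ioo (g 1) (g 0) := ⟨hg1n, hg0⟩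
    obtain ⟨t0, ht0mem, ht0⟩ := hivt h0mem
    exact main t0 ht0mem.1 ht0
  · -- u itself is on the Nehari manifold
    refine ⟨Sw d m α ω u, ⟨u, ⟨hu, hu0, ?_⟩, rfl⟩, le_refl _⟩
    rw [Nw]
    rw [hg1] at hg1n
    rw [← hM, ← ha, ← hb, ← hP]
    linarith
  · -- scale up: root in (1, T)
    have hcK1' : cK < 1 := hcK1
    set X : ℝ := (ω * M + b) / ((1 - cK) * P) with hX
    have hXnn : 0 ≤ X := by
      rw [hX]
      apply div_nonneg (by positivity)
      have : 0 < 1 - cK := by linarith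
      positivity
    set T : ℝ := max 2 (Real.sqrt X + 1) with hT
    have hT1 : 1 < T := lt_of_lt_of_le (by norm_num) (le_max_left _ _)
    have hTX : X < T ^ 2 := by
      have h1 : Real.sqrt X + 1 ≤ T := le_max_right _ _
      have h2 : Real.sqrt X < T := by linarith
      calc X = Real.sqrt X ^ 2 := (Real.sq_sqrt hXnn).symm
        _ < T ^ 2 := by
            apply pow_lt_pow_left₀ h2 (Real.sqrt_nonneg _)
            norm_num
    have hgT : g T < 0 := by
      have hTs : T ^ 2 * P ≤ T ^ s * P := by
        apply mul_le_mul_of_nonneg_right _ hPpos.le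
        calc (T:ℝ) ^ 2 = T ^ ((2:ℕ):ℝ) := (Real.rpow_natCast T 2).symm
          _ ≤ T ^ s := Real.rpow_le_rpow_of_exponent_le (by linarith) (by exact_mod_cast hs2)
      have hbig : ω * M + b < T^2 * ((1 - cK) * P) := by
        have h0 : 0 < (1 - cK) * P := mul_pos (by linarith) hPpos
        calc ω * M + b = X * ((1 - cK) * P) := by
              rw [hX, div_mul_cancel₀ _ h0.ne']
          _ < T^2 * ((1 - cK) * P) := by
              exact mul_lt_mul_of_pos_right hTX h0
      have hgT' : g T = ω * M + T ^ 2 * a + b - T ^ s * P := rfl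
      rw [hgT', haK]
      nlinarith [hTs, hbig]
    have hivt := intermediate_value_Ioo' (le_of_lt hT1) hgc.continuousOn
    have h0mem : (0:ℝ) ∈ Set.Ioo (g T) (g 1) := ⟨hgT, hg1n⟩
    obtain ⟨t0, ht0mem, ht0⟩ := hivt h0mem
    exact main t0 (by linarith [ht0mem.1]) ht0

end NLS
namespace NLS

variable {d m : ℕ} {α ω : ℝ}

lemma gammaSet_nonneg (hα0 : 0 < α) (hαd : 4 ≤ α * d) (hω : 0 < ω) :
    ∀ r ∈ gammaSet d m α ω, 0 ≤ r := by
  rintro r ⟨u, ⟨hu, hu0, hK⟩, rfl⟩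
  have hα2 : (0:ℝ) < α + 2 := by linarith
  set cK : ℝ := α * d / (2 * (α + 2)) with hcK
  set P := Pot d m α u with hP
  set b := gradYsq d m u with hb
  set M := Mass d m u with hM
  have hPnn : 0 ≤ P := pot_nonneg u
  have hbnn : 0 ≤ b := gradYsq_nonneg u
  have hMnn : 0 ≤ M := mass_nonneg u
  have haK : gradXsq d m u = cK * P := by
    rw [Kw] at hK; rw [hcK, hP]; linarith
  have hco : 1 / (α + 2) ≤ cK / 2 := by
    rw [hcK, div_div, div_le_div_iff₀ hα2 (by positivity)]
    nlinarith
  have hterm : 0 ≤ P * (cK / 2 - 1 / (α + 2)) := mul_nonneg hPnn (by linarith)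
  rw [Sw, En, haK, ← hb, ← hM, ← hP]
  have e1 : (cK * P + b) / 2 - P / (α + 2) + ω / 2 * M
      = P * (cK / 2 - 1 / (α + 2)) + b / 2 + ω / 2 * M := by ring
  rw [e1]
  have hMb : 0 ≤ ω / 2 * M := by positivity
  linarith

lemma betaSet_nonneg (hα0 : 0 < α) (hω : 0 < ω) :
    ∀ r ∈ betaSet d m α ω, 0 ≤ r := by
  rintro r ⟨u, ⟨hu, hu0, hN⟩, rfl⟩
  have hα2 : (0:ℝ) < α + 2 := by linarith
  set P := Pot d m α u with hP
  set a := gradXsq d m u with ha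
  set b := gradYsq d m u with hb
  set M := Mass d m u with hM
  have hPnn : 0 ≤ P := pot_nonneg u
  have hbnn : 0 ≤ b := gradYsq_nonneg u
  have hann : 0 ≤ a := gradXsq_nonneg u
  have hMnn : 0 ≤ M := mass_nonneg u
  have hNP : P = ω * M + a + b := by
    rw [Nw] at hN; rw [hP, ha, hb, hM]; linarith
  have hfrac : 1 / (α + 2) ≤ 1 / 2 := by
    rw [div_le_div_iff₀ hα2 (by norm_num)]
    linarith
  have hMω : 0 ≤ ω * M := by positivity
  rw [Sw, En, ← ha, ← hb, ← hM, ← hP, hNP]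
  have e2 : (a + b) / 2 - (ω * M + a + b) / (α + 2) + ω / 2 * M
      = (ω * M + a + b) * (1 / 2 - 1 / (α + 2)) := by ring
  rw [e2]
  exact mul_nonneg (by linarith) (by linarith)

end NLS
namespace NLS

/-- For every `ω ∈ (0,∞)`, `γ_ω = β_ω`. -/
theorem gamma_eq_beta (d m : ℕ) (hd : 1 ≤ d) (hm : m ≤ 1) (α : ℝ)
    (hα₁ : 4 / (d : ℝ) ≤ α) (hα₂ : 3 ≤ d + m → α < 4 / ((d : ℝ) + m - 2))
    (ω : ℝ) (hω : 0 < ω) :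
    gamma d m α ω = beta d m α ω := by
  have hd0 : (0:ℝ) < d := by
    have : (1:ℝ) ≤ d := by exact_mod_cast hd
    linarith
  have hα0 : 0 < α := lt_of_lt_of_le (by positivity) hα₁
  have hαd : 4 ≤ α * d := by
    rw [div_le_iff₀ hd0] at hα₁
    linarith
  have hcK1 : α * d / (2 * (α + 2)) < 1 := by
    rw [div_lt_one (by positivity)]
    rcases le_or_gt d 2 with h2 | h2
    · have h2' : (d:ℝ) ≤ 2 := by exact_mod_cast h2
      nlinarith
    · have h3 : 3 ≤ d + m := by omega
      have hαlt := hα₂ h3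
      have hdm : (0:ℝ) < (d:ℝ) + m - 2 := by
        have h3' : (3:ℝ) ≤ (d:ℝ) + (m:ℝ) := by exact_mod_cast h3
        linarith
      rw [lt_div_iff₀ hdm] at hαlt
      have hmn : (0:ℝ) ≤ (m:ℝ) := Nat.cast_nonneg m
      nlinarith
  have hbddγ : BddBelow (gammaSet d m α ω) :=
    ⟨0, fun r hr => gammaSet_nonneg hα0 hαd hω r hr⟩
  have hbddβ : BddBelow (betaSet d m α ω) :=
    ⟨0, fun r hr => betaSet_nonneg hα0 hω r hr⟩
  have T1 : ∀ r ∈ gammaSet d m α ω, ∃ r' ∈ betaSet d m α ω, r' ≤ r := by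
    rintro r ⟨u, ⟨hu, hu0, hK⟩, rfl⟩
    exact betaSet_le_of_virial hd hα0 hαd hcK1 hω hu hu0 hK
  have T2 : ∀ r ∈ betaSet d m α ω, ∃ r' ∈ gammaSet d m α ω, r' ≤ r := by
    rintro r ⟨u, ⟨hu, hu0, hN⟩, rfl⟩
    exact gammaSet_le_of_nehari hd hα0 hαd hω hu hu0 hN
  rcases Set.eq_empty_or_nonempty (gammaSet d m α ω) with hγe | hγne
  · have hβe : betaSet d m α ω = ∅ := by
      rcases Set.eq_empty_or_nonempty (betaSet d m α ω) with h | ⟨r, hr⟩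
      · exact h
      · obtain ⟨r', hr', _⟩ := T2 r hr
        rw [hγe] at hr'
        exact absurd hr' (Set.notMem_empty _)
    rw [gamma, beta, hγe, hβe]
  · have hβne : (betaSet d m α ω).Nonempty := by
      obtain ⟨r, hr⟩ := hγne
      obtain ⟨r', hr', _⟩ := T1 r hr
      exact ⟨r', hr'⟩
    apply le_antisymm
    · apply le_csInf hβne
      intro r hr
      obtain ⟨r', hr', hle⟩ := T2 r hr
      exact le_trans (csInf_le hbddγ hr') hle
    · apply le_csInf hγne
      intro r hr
      obtain ⟨r', hr', hle⟩ := T1 r hr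
      exact le_trans (csInf_le hbddβ hr') hle

end NLS
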